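/- With Δ_W = 1 + Tu^{q−1} − T^q u^{q(q−1)} + ⋯, Δ_T = u^{q−1} − u^{q(q−1)} + ⋯ in A[[u]], and E_T a power series with E_T^{q−1} = Δ_W Δ_T and E_T = u − Tu^q + ⋯, the Laurent series j_T^+ := (Δ_W − T^{(q−1)/2}Δ_T)^2 / E_T^{q−1} has expansion j_T^+ = u^{−(q−1)} + (2(T − T^{(q−1)/2}) − T) + O(u^{q−1}). -/

import Mathlib

open PowerSeries Finset

private lemma sum_two_aux {M : Type*} [AddCommMonoid M] {s : Finset (ℕ × ℕ)} (f : ℕ × ℕ → M)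
    (a b : ℕ × ℕ) (ha : a ∈ s) (hb : b ∈ s) (hab : a ≠ b)
    (h0 : ∀ x ∈ s, x ≠ a → x ≠ b → f x = 0) : ∑ x ∈ s, f x = f a + f b := by
  classical
  rw [← Finset.add_sum_erase _ f ha]
  congr 1
  rw [← Finset.add_sum_erase _ f (Finset.mem_erase.mpr ⟨Ne.symm hab, hb⟩)]
  have hz : ∑ x ∈ (s.erase a).erase b, f x = 0 := by
    refine Finset.sum_eq_zero fun x hx => ?_
    obtain ⟨hxb, hxa, hxs⟩ : x ≠ b ∧ x ≠ a ∧ x ∈ s := by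
      simpa [Finset.mem_erase, and_assoc] using hx
    exact h0 x hxs hxa hxb
  rw [hz, add_zero]

private lemma ofPS_coeff_neg {K : Type*} [Semiring K] (f : PowerSeries K) (m : ℤ) (hm : m < 0) :
    (HahnSeries.ofPowerSeries ℤ K f).coeff m = 0 := by
  rw [HahnSeries.ofPowerSeries_apply]
  apply HahnSeries.embDomain_notin_range
  simp only [Set.mem_range, RelEmbedding.coe_mk, Function.Embedding.coeFn_mk]
  rintro ⟨k, hk⟩
  subst hk
  exact absurd hm (not_lt.mpr (Nat.cast_nonneg (α := ℤ) k))

theorem stmt_11 (p r q : ℕ) (hp : p.Prime) (hpodd : Odd p) (hr : 0 < r) (hq : q = p ^ r)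
    (K : Type*) [Field K] (T : K)
    (ΔT ΔW ET : PowerSeries K)
    (hT1 : PowerSeries.coeff (q - 1) ΔT = 1)
    (hTlow : ∀ i < q - 1, PowerSeries.coeff i ΔT = 0)
    (hTmid : ∀ i, q - 1 < i → i < q * (q - 1) → PowerSeries.coeff i ΔT = 0)
    (hW0 : PowerSeries.coeff 0 ΔW = 1)
    (hW1 : PowerSeries.coeff (q - 1) ΔW = T)
    (hWmid1 : ∀ i, 0 < i → i < q - 1 → PowerSeries.coeff i ΔW = 0)
    (hWmid2 : ∀ i, q - 1 < i → i < q * (q - 1) → PowerSeries.coeff i ΔW = 0)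
    (hrel : ET ^ (q - 1) = ΔW * ΔT)
    (hE0 : PowerSeries.coeff 0 ET = 0)
    (hE1 : PowerSeries.coeff 1 ET = 1)
    (hEq : PowerSeries.coeff q ET = -T) :
    ∀ jTplus : LaurentSeries K,
      jTplus = (HahnSeries.ofPowerSeries ℤ K
          ((ΔW - (PowerSeries.C (T ^ ((q - 1) / 2))) * ΔT) ^ 2)) /
          (HahnSeries.ofPowerSeries ℤ K (ET ^ (q - 1))) →
      jTplus.coeff (-((q : ℤ) - 1)) = 1 ∧
      jTplus.coeff 0 = 2 * (T - T ^ ((q - 1) / 2)) - T ∧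
      ∀ n : ℤ, n < (q : ℤ) - 1 → n ≠ -((q : ℤ) - 1) → n ≠ 0 → jTplus.coeff n = 0 := by
  intro jTplus hj
  have hp2 : p ≠ 2 := by rintro rfl; exact (Nat.not_odd_iff_even.mpr (by decide)) hpodd
  have hp3 : 3 ≤ p := by have := hp.two_le; omega
  have hq3 : 3 ≤ q := hq ▸ le_trans hp3 (Nat.le_self_pow (by omega) p)
  obtain ⟨s, rfl⟩ : ∃ s, q = s + 1 := ⟨q - 1, by omega⟩
  simp only [Nat.add_sub_cancel] at hT1 hTlow hTmid hW1 hWmid1 hWmid2 hrel hj ⊢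
  have hs2 : 2 ≤ s := by omega
  have hcast : ((s + 1 : ℕ) : ℤ) - 1 = (s : ℤ) := by push_cast; ring
  rw [hcast]
  have hss : 3 * s ≤ (s + 1) * s := by nlinarith
  set L := (s + 1) * s with hL
  set c : K := T ^ (s / 2) with hc
  set B : PowerSeries K := ΔW - PowerSeries.C c * ΔT with hB
  set N : PowerSeries K := B ^ 2 with hN
  -- coefficients of B
  have hBc : ∀ i, coeff i B = coeff i ΔW - c * coeff i ΔT := by
    intro i; simp [hB]
  have hB0 : coeff 0 B = 1 := by rw [hBc, hTlow 0 (by omega), hW0]; ring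
  have hBs : coeff s B = T - c := by rw [hBc, hT1, hW1]; ring
  have hBo : ∀ i, i < L → i ≠ 0 → i ≠ s → coeff i B = 0 := by
    intro i hi h0 hs'
    rcases lt_or_gt_of_ne hs' with h | h
    · rw [hBc, hWmid1 i (by omega) h, hTlow i h]; ring
    · rw [hBc, hWmid2 i h hi, hTmid i h hi]; ring
  -- coefficients of N = B^2
  have hN0 : coeff 0 N = 1 := by
    rw [hN, pow_two, PowerSeries.coeff_mul]
    simp [hB0]
  have hNs : coeff s N = 2 * (T - c) := by
    rw [hN, pow_two, PowerSeries.coeff_mul]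
    rw [sum_two_aux _ (0, s) (s, 0) (by simp) (by simp) (by simp; omega) ?_]
    · rw [hB0, hBs]; ring
    · intro x hx hxa hxb
      rw [Finset.HasAntidiagonal.mem_antidiagonal] at hx
      obtain ⟨x1, x2⟩ := x
      have h1 : x1 ≠ 0 := fun h => hxa (by rw [Prod.mk.injEq]; exact ⟨h, by omega⟩)
      have h2 : x1 ≠ s := fun h => hxb (by rw [Prod.mk.injEq]; exact ⟨h, by omega⟩)
      rw [hBo x1 (by omega) h1 h2, zero_mul]
  have hNo : ∀ m, m < 2 * s → m ≠ 0 → m ≠ s → coeff m N = 0 := by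
    intro m hm h0 hs'
    rw [hN, pow_two, PowerSeries.coeff_mul]
    refine Finset.sum_eq_zero fun x hx => ?_
    obtain ⟨x1, x2⟩ := x
    rw [Finset.HasAntidiagonal.mem_antidiagonal] at hx
    by_cases h1 : x1 = 0
    · rw [hBo x2 (by omega) (by omega) (by omega), mul_zero]
    · by_cases h1s : x1 = s
      · rw [hBo x2 (by omega) (by omega) (by omega), mul_zero]
      · rw [hBo x1 (by omega) h1 h1s, zero_mul]
  -- coefficients of D = ΔW * ΔT
  have hDlow : ∀ m < s, coeff m (ΔW * ΔT) = 0 := by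
    intro m hm
    rw [PowerSeries.coeff_mul]
    refine Finset.sum_eq_zero fun x hx => ?_
    rw [Finset.HasAntidiagonal.mem_antidiagonal] at hx
    rw [hTlow x.2 (by omega), mul_zero]
  have hDgen : ∀ m, s ≤ m → m ≤ 3 * s - 1 → coeff m (ΔW * ΔT) = coeff (m - s) ΔW := by
    intro m h1 h2
    rw [PowerSeries.coeff_mul]
    rw [Finset.sum_eq_single_of_mem (m - s, s) (by rw [Finset.HasAntidiagonal.mem_antidiagonal]; omega) ?_]
    · rw [hT1, mul_one]
    · intro x hx hne
      rw [Finset.HasAntidiagonal.mem_antidiagonal] at hx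
      obtain ⟨x1, x2⟩ := x
      have hx2 : x2 ≠ s := fun h => hne (by rw [Prod.mk.injEq]; exact ⟨by omega, h⟩)
      rcases lt_or_gt_of_ne hx2 with h | h
      · rw [hTlow x2 h, mul_zero]
      · rw [hTmid x2 h (by omega), mul_zero]
  have hDs : coeff s (ΔW * ΔT) = 1 := by
    rw [hDgen s le_rfl (by omega), Nat.sub_self, hW0]
  have hD2s : coeff (2 * s) (ΔW * ΔT) = T := by
    rw [hDgen _ (by omega) (by omega), show 2 * s - s = s by omega, hW1]
  have hDo : ∀ m, m ≤ 3 * s - 1 → m ≠ s → m ≠ 2 * s → coeff m (ΔW * ΔT) = 0 := by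
    intro m hm h1 h2
    rcases lt_or_ge m s with h | h
    · exact hDlow m h
    · rw [hDgen m h hm]
      rcases Nat.lt_or_ge (m - s) s with h' | h'
      · exact hWmid1 _ (by omega) h'
      · exact hWmid2 _ (by omega) (by omega)
  -- factor ΔT = X^s * S
  obtain ⟨S, hS⟩ : (PowerSeries.X : PowerSeries K) ^ s ∣ ΔT :=
    PowerSeries.X_pow_dvd_iff.mpr hTlow
  have hS0 : PowerSeries.constantCoeff S = 1 := by
    have h := PowerSeries.coeff_X_pow_mul S s 0
    rw [← hS, zero_add, hT1] at h
    rw [← PowerSeries.coeff_zero_eq_constantCoeff]; exact h.symm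
  set V := (ΔW * S).invOfUnit 1 with hV
  have hUV : (ΔW * S) * V = 1 := by
    refine PowerSeries.mul_invOfUnit _ 1 ?_
    rw [map_mul, hS0]
    rw [← PowerSeries.coeff_zero_eq_constantCoeff] at *
    rw [hW0]; simp
  set Q := N * V with hQdef
  have hDQ : (ΔW * ΔT) * Q = N * (PowerSeries.X : PowerSeries K) ^ s := by
    calc (ΔW * ΔT) * Q = (N * (PowerSeries.X : PowerSeries K) ^ s) * ((ΔW * S) * V) := by
          rw [hS, hQdef]; ring
      _ = N * (PowerSeries.X : PowerSeries K) ^ s := by rw [hUV, mul_one]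
  -- coefficients of Q
  have hconv : ∀ m, coeff m N =
      ∑ x ∈ antidiagonal (m + s), coeff x.1 (ΔW * ΔT) * coeff x.2 Q := by
    intro m
    have h := PowerSeries.coeff_mul_X_pow N s m
    rw [← hDQ] at h
    rw [← h, PowerSeries.coeff_mul]
  have hQlow : ∀ m < s, coeff m Q = coeff m N := by
    intro m hm
    have h := hconv m
    rw [Finset.sum_eq_single_of_mem (s, m) (by rw [Finset.HasAntidiagonal.mem_antidiagonal]; omega) ?_] at h
    · rw [hDs, one_mul] at h; exact h.symm
    · intro x hx hne
      rw [Finset.HasAntidiagonal.mem_antidiagonal] at hx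
      obtain ⟨x1, x2⟩ := x
      have h1 : x1 ≠ s := fun hh => hne (by rw [Prod.mk.injEq]; exact ⟨hh, by omega⟩)
      rw [hDo x1 (by omega) h1 (by omega), zero_mul]
  have hQ0 : coeff 0 Q = 1 := by rw [hQlow 0 (by omega), hN0]
  have hQmid : ∀ m, 0 < m → m < s → coeff m Q = 0 := by
    intro m h1 h2
    rw [hQlow m h2]; exact hNo m (by omega) (by omega) (by omega)
  have hQkey : ∀ m, s ≤ m → m < 2 * s →
      coeff m N = coeff m Q + T * coeff (m - s) Q := by
    intro m h1 h2
    have h := hconv m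
    rw [sum_two_aux _ (s, m) (2 * s, m - s)
        (by rw [Finset.HasAntidiagonal.mem_antidiagonal]; omega)
        (by rw [Finset.HasAntidiagonal.mem_antidiagonal]; omega)
        (by rw [Ne, Prod.mk.injEq]; omega) ?_] at h
    · rw [hDs, one_mul, hD2s] at h; exact h
    · intro x hx hxa hxb
      rw [Finset.HasAntidiagonal.mem_antidiagonal] at hx
      obtain ⟨x1, x2⟩ := x
      have e1 : x1 ≠ s := fun hh => hxa (by rw [Prod.mk.injEq]; exact ⟨hh, by omega⟩)
      have e2 : x1 ≠ 2 * s := fun hh => hxb (by rw [Prod.mk.injEq]; exact ⟨hh, by omega⟩)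
      rw [hDo x1 (by omega) e1 e2, zero_mul]
  have hQs : coeff s Q = 2 * (T - c) - T := by
    have h := hQkey s le_rfl (by omega)
    rw [hNs, Nat.sub_self, hQ0, mul_one] at h
    linear_combination -h
  have hQhigh : ∀ m, s < m → m < 2 * s → coeff m Q = 0 := by
    intro m h1 h2
    have h := hQkey m (by omega) h2
    rw [hNo m h2 (by omega) (by omega), hQmid (m - s) (by omega) (by omega), mul_zero,
      add_zero] at h
    exact h.symm
  -- Laurent series identification
  have hDne : (HahnSeries.ofPowerSeries ℤ K (ET ^ s)) ≠ 0 := by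
    rw [hrel]
    intro h
    have h0 : (ΔW * ΔT) = 0 := HahnSeries.ofPowerSeries_injective (by rw [h, map_zero])
    apply one_ne_zero (α := K)
    rw [← hDs, h0, map_zero]
  have hJQ : jTplus = HahnSeries.single (-(s : ℤ)) 1 * HahnSeries.ofPowerSeries ℤ K Q := by
    rw [hj, div_eq_iff hDne, hrel]
    have key : (HahnSeries.ofPowerSeries ℤ K Q) * (HahnSeries.ofPowerSeries ℤ K (ΔW * ΔT)) =
        HahnSeries.single ((s : ℤ)) 1 * HahnSeries.ofPowerSeries ℤ K N := by
      rw [← map_mul, mul_comm Q, hDQ, map_mul, HahnSeries.ofPowerSeries_X_pow, mul_comm]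
    rw [mul_assoc, key, ← mul_assoc, HahnSeries.single_mul_single, neg_add_cancel, one_mul,
      HahnSeries.single_zero_one, one_mul]
  have hcoeff : ∀ n : ℤ, jTplus.coeff n = (HahnSeries.ofPowerSeries ℤ K Q).coeff (n + s) := by
    intro n
    calc jTplus.coeff n
        = (HahnSeries.single (-(s : ℤ)) 1 * HahnSeries.ofPowerSeries ℤ K Q).coeff
            ((n + (s : ℤ)) + (-(s : ℤ))) := by rw [hJQ]; congr 1; ring
      _ = 1 * (HahnSeries.ofPowerSeries ℤ K Q).coeff (n + s) := HahnSeries.coeff_single_mul_add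
      _ = _ := one_mul _
  refine ⟨?_, ?_, ?_⟩
  · rw [hcoeff, show (-(s : ℤ)) + (s : ℤ) = ((0 : ℕ) : ℤ) by simp,
      HahnSeries.ofPowerSeries_apply_coeff]
    exact hQ0
  · rw [hcoeff, show ((0 : ℤ) + (s : ℤ)) = ((s : ℕ) : ℤ) by simp,
      HahnSeries.ofPowerSeries_apply_coeff]
    exact hQs
  · intro n hn hne1 hne0
    rw [hcoeff]
    rcases lt_or_ge (n + (s : ℤ)) 0 with h | h
    · exact ofPS_coeff_neg Q _ h
    · obtain ⟨k, hk⟩ : ∃ k : ℕ, (k : ℤ) = n + s := ⟨(n + s).toNat, Int.toNat_of_nonneg h⟩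
      rw [← hk, HahnSeries.ofPowerSeries_apply_coeff]
      have hk2 : k < 2 * s := by omega
      have hks : k ≠ s := by omega
      rcases lt_or_gt_of_ne hks with h' | h'
      · exact hQmid k (by omega) h'
      · exact hQhigh k h' hk2
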